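/- Let Φ_U : ℝ → ℝ be the time-1 solution map of v' + g(U, v) = f(t) on [0,1] (sending an initial value v(0) to v(1)), where ∂g/∂v ≥ g_min > 0. Then Φ_U is a contraction with Lipschitz constant e^{−g_min} < 1, and hence has a unique fixed point v* (the periodic initial value); moreover the shooting iterates v_{k+1} = Φ_U(v_k) satisfy |v_k − v*| ≤ e^{−k g_min}|v_0 − v*|. -/

import Mathlib

open Real

/-- the period-1 solution map is a contraction with factor `e^{-g_min}`,
hence has a unique fixed point and the shooting iterates converge geometrically. -/
theorem stmt12
    (gmin U : ℝ) (hgmin : 0 < gmin)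
    (g : ℝ → ℝ → ℝ) (gv : ℝ → ℝ → ℝ) (f : ℝ → ℝ) (hf : Continuous f)
    (hgv : ∀ a b, HasDerivAt (fun y => g a y) (gv a b) b)
    (hgvbd : ∀ a b, gmin ≤ gv a b)
    -- the flow: `w β` is the solution with initial value `β`, and `Φ` is the time-1 map
    (w : ℝ → ℝ → ℝ) (Φ : ℝ → ℝ)
    (hw0 : ∀ β, w β 0 = β)
    (hw : ∀ β, ∀ t ∈ Set.Icc (0:ℝ) 1, HasDerivAt (w β) (f t - g U (w β t)) t)
    (hΦ : ∀ β, Φ β = w β 1) :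
    (∀ β₁ β₂, |Φ β₁ - Φ β₂| ≤ Real.exp (-gmin) * |β₁ - β₂|) ∧
      ∃ vstar : ℝ, Φ vstar = vstar ∧ (∀ y, Φ y = y → y = vstar) ∧
        ∀ v0 : ℝ, ∀ k : ℕ, |Φ^[k] v0 - vstar| ≤ Real.exp (-(k : ℝ) * gmin) * |v0 - vstar| := by
  -- strong monotonicity of g U
  have hmono : ∀ a b : ℝ, gmin * (a - b) ^ 2 ≤ (g U a - g U b) * (a - b) := by
    intro a b
    set p : ℝ → ℝ := fun y => g U y - gmin * y with hp
    have hpder : ∀ y, HasDerivAt p (gv U y - gmin) y := fun y =>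
      (hgv U y).sub ((hasDerivAt_id y).const_mul gmin |>.congr_deriv (by ring))
    have hpm : Monotone p := by
      apply monotone_of_deriv_nonneg
      · exact fun y => (hpder y).differentiableAt
      · intro y
        rw [(hpder y).deriv]
        linarith [hgvbd U y]
    have key : 0 ≤ (p a - p b) * (a - b) := by
      rcases le_total a b with h | h
      · nlinarith [hpm h]
      · nlinarith [hpm h]
    simp only [hp] at key
    nlinarith [key]
  -- contraction estimate
  have hlip : ∀ β₁ β₂, |Φ β₁ - Φ β₂| ≤ Real.exp (-gmin) * |β₁ - β₂| := by
    intro β₁ β₂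
    set D : ℝ → ℝ := fun t => w β₁ t - w β₂ t with hD
    set F : ℝ → ℝ := fun t => Real.exp (2 * gmin * t) * (D t) ^ 2 with hF
    have hFder : ∀ t ∈ Set.Icc (0:ℝ) 1, HasDerivAt F
        (2 * gmin * Real.exp (2 * gmin * t) * (D t) ^ 2 +
          Real.exp (2 * gmin * t) * (2 * D t * (g U (w β₂ t) - g U (w β₁ t)))) t := by
      intro t ht
      have hexp : HasDerivAt (fun s => Real.exp (2 * gmin * s)) (2 * gmin * Real.exp (2 * gmin * t)) t := by
        have := ((hasDerivAt_id t).const_mul (2 * gmin)).exp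
        simpa [mul_comm] using this
      have hDd : HasDerivAt D (g U (w β₂ t) - g U (w β₁ t)) t := by
        have := (hw β₁ t ht).sub (hw β₂ t ht)
        simpa [hD] using (show HasDerivAt (fun t => w β₁ t - w β₂ t) _ t from this.congr_deriv (by ring))
      have hsq : HasDerivAt (fun s => (D s) ^ 2) (2 * D t * (g U (w β₂ t) - g U (w β₁ t))) t := by
        have := hDd.pow 2
        simpa [mul_comm, mul_assoc, mul_left_comm] using (show HasDerivAt (fun s => (D s) ^ 2) _ t from this)
      exact hexp.mul hsq
    have hanti : AntitoneOn F (Set.Icc 0 1) := by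
      apply antitoneOn_of_deriv_nonpos (convex_Icc 0 1)
      · exact fun t ht => (hFder t ht).continuousAt.continuousWithinAt
      · intro t ht
        rw [interior_Icc] at ht
        exact (hFder t (Set.Ioo_subset_Icc_self ht)).differentiableAt.differentiableWithinAt
      · intro t ht
        rw [interior_Icc] at ht
        rw [(hFder t (Set.Ioo_subset_Icc_self ht)).deriv]
        have h1 := hmono (w β₁ t) (w β₂ t)
        have h2 := mul_le_mul_of_nonneg_left h1
          (by positivity : (0:ℝ) ≤ 2 * Real.exp (2 * gmin * t))
        simp only [hD]
        nlinarith [h2]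
    have hF10 : F 1 ≤ F 0 := hanti (by norm_num) (by norm_num) zero_le_one
    have hF0 : F 0 = (β₁ - β₂) ^ 2 := by simp [hF, hD, hw0]
    have hF1 : F 1 = Real.exp (2 * gmin) * (Φ β₁ - Φ β₂) ^ 2 := by
      simp [hF, hD, hΦ]
    have hsq : (Φ β₁ - Φ β₂) ^ 2 ≤ Real.exp (-gmin) ^ 2 * (β₁ - β₂) ^ 2 := by
      have he : Real.exp (-gmin) ^ 2 * Real.exp (2 * gmin) = 1 := by
        rw [sq, ← Real.exp_add, ← Real.exp_add,
          show -gmin + -gmin + 2 * gmin = 0 by ring, Real.exp_zero]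
      nlinarith [hF10, hF0 ▸ hF1 ▸ hF10, Real.exp_pos (2 * gmin), sq_nonneg (Φ β₁ - Φ β₂),
        sq_nonneg (β₁ - β₂), Real.exp_pos (-gmin)]
    have h2 : |Φ β₁ - Φ β₂| ^ 2 ≤ (Real.exp (-gmin) * |β₁ - β₂|) ^ 2 := by
      rw [sq_abs, mul_pow, sq_abs]; exact hsq
    calc |Φ β₁ - Φ β₂| = Real.sqrt (|Φ β₁ - Φ β₂| ^ 2) := (Real.sqrt_sq (abs_nonneg _)).symm
      _ ≤ Real.sqrt ((Real.exp (-gmin) * |β₁ - β₂|) ^ 2) := Real.sqrt_le_sqrt h2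
      _ = Real.exp (-gmin) * |β₁ - β₂| := Real.sqrt_sq (by positivity)
  refine ⟨hlip, ?_⟩
  set K : NNReal := ⟨Real.exp (-gmin), (Real.exp_pos _).le⟩ with hK
  have hlipW : LipschitzWith K Φ := by
    apply LipschitzWith.of_dist_le_mul
    intro x y
    rw [Real.dist_eq, Real.dist_eq]
    exact hlip x y
  have hcw : ContractingWith K Φ := by
    refine ⟨?_, hlipW⟩
    have : Real.exp (-gmin) < 1 := Real.exp_lt_one_iff.mpr (by linarith)
    exact_mod_cast this
  refine ⟨hcw.fixedPoint Φ, hcw.fixedPoint_isFixedPt, fun y hy => hcw.fixedPoint_unique hy, ?_⟩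
  intro v0 k
  have hit : Φ^[k] (hcw.fixedPoint Φ) = hcw.fixedPoint Φ := hcw.fixedPoint_isFixedPt.iterate k
  have := (hlipW.iterate k).dist_le_mul v0 (hcw.fixedPoint Φ)
  rw [hit, Real.dist_eq, Real.dist_eq] at this
  calc |Φ^[k] v0 - hcw.fixedPoint Φ| ≤ (K : ℝ) ^ k * |v0 - hcw.fixedPoint Φ| := by
        exact_mod_cast this
    _ = Real.exp (-(k : ℝ) * gmin) * |v0 - hcw.fixedPoint Φ| := by
        congr 1
        rw [hK]
        show Real.exp (-gmin) ^ k = _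
        rw [← Real.exp_nat_mul]
        ring_nf
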